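/- If |ξ₁| ≈ 2^{k₁}, |ξ₂| ≈ 2^{k₂}, |ξ₃| ≈ 2^{k₃} and max{k₁,k₂} ≤ k₃ - O(1) with O(1) large enough, then |Φ_{++-}(ξ₁,ξ₂,ξ₃)| = |-Λ(ξ₁+ξ₂+ξ₃) + Λ(ξ₁) + Λ(ξ₂) - Λ(ξ₃)| ≥ Λ(ξ₃)/2. Concretely: there exists C₀ > 0 such that if Λ(ξ₁) + Λ(ξ₂) ≤ Λ(ξ₃)/C₀ then |Λ(ξ₁) + Λ(ξ₂) - Λ(ξ₃) - Λ(ξ₁+ξ₂+ξ₃)| ≥ Λ(ξ₃)/2. -/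
import Mathlib


/-- Λ(ξ) = √(1+ξ²) -/
noncomputable def Lam (ξ : ℝ) : ℝ := Real.sqrt (1 + ξ ^ 2)

lemma Lam_nonneg (ξ : ℝ) : 0 ≤ Lam ξ := Real.sqrt_nonneg _

lemma abs_le_Lam (ξ : ℝ) : |ξ| ≤ Lam ξ := by
  rw [Lam, ← Real.sqrt_sq_eq_abs]
  exact Real.sqrt_le_sqrt (by nlinarith)

lemma Lam_lipschitz (x y : ℝ) : Lam x ≤ Lam y + |x - y| := by
  have hy : 0 ≤ Lam y := Lam_nonneg y
  have hys : Lam y ^ 2 = 1 + y ^ 2 := Real.sq_sqrt (by positivity)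
  have hyabs : |y| ≤ Lam y := abs_le_Lam y
  have h1 : Lam x ^ 2 ≤ (Lam y + |x - y|) ^ 2 := by
    have hxs : Lam x ^ 2 = 1 + x ^ 2 := Real.sq_sqrt (by positivity)
    have h2 : y * (x - y) ≤ |y| * |x - y| := by
      calc y * (x - y) ≤ |y * (x - y)| := le_abs_self _
        _ = |y| * |x - y| := abs_mul _ _
    nlinarith [abs_nonneg (x - y), abs_nonneg y, sq_abs (x - y)]
  nlinarith [Lam_nonneg x, abs_nonneg (x - y)]

/-- Lower bound for the bad phase Φ_{++-} in the low-low-high regime: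
    there exists C₀ > 0 such that if Λ(ξ₁) + Λ(ξ₂) ≤ Λ(ξ₃)/C₀ then
    |Λ(ξ₁) + Λ(ξ₂) - Λ(ξ₃) - Λ(ξ₁+ξ₂+ξ₃)| ≥ Λ(ξ₃)/2. -/
theorem bad_phase_lower_bound :
    ∃ C₀ : ℝ, 0 < C₀ ∧ ∀ ξ₁ ξ₂ ξ₃ : ℝ,
      Lam ξ₁ + Lam ξ₂ ≤ Lam ξ₃ / C₀ →
      |Lam ξ₁ + Lam ξ₂ - Lam ξ₃ - Lam (ξ₁ + ξ₂ + ξ₃)| ≥ Lam ξ₃ / 2 := by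
  refine ⟨2, by norm_num, fun ξ₁ ξ₂ ξ₃ h => ?_⟩
  have hlip : Lam ξ₃ ≤ Lam (ξ₁ + ξ₂ + ξ₃) + |ξ₁ + ξ₂| := by
    have := Lam_lipschitz ξ₃ (ξ₁ + ξ₂ + ξ₃)
    have : |ξ₃ - (ξ₁ + ξ₂ + ξ₃)| = |ξ₁ + ξ₂| := by
      rw [show ξ₃ - (ξ₁ + ξ₂ + ξ₃) = -(ξ₁ + ξ₂) by ring, abs_neg]
    linarith [Lam_lipschitz ξ₃ (ξ₁ + ξ₂ + ξ₃), this ▸ Lam_lipschitz ξ₃ (ξ₁ + ξ₂ + ξ₃)]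
  have h12 : |ξ₁ + ξ₂| ≤ Lam ξ₁ + Lam ξ₂ := by
    calc |ξ₁ + ξ₂| ≤ |ξ₁| + |ξ₂| := abs_add_le _ _
      _ ≤ Lam ξ₁ + Lam ξ₂ := add_le_add (abs_le_Lam _) (abs_le_Lam _)
  rw [ge_iff_le, le_abs]
  right
  linarith [Lam_nonneg ξ₃]
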